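/- Lemma: let K ∈ ℝ^{n×n} be any symmetric matrix, suppose γ_min > 0, and let X̂ be SDP-1-feasible with ⟨K, X̂⟩ ≥ ⟨K, X₀⟩ (in particular, X̂ may be any maximizer of ⟨K, X⟩ over SDP-1-feasible matrices X). Then ‖X₀ − X̂‖₁ ≤ 2·⟨K − K̃, X̂ − X₀⟩ / γ_min. -/

import Mathlib

open Matrix

/-- The entrywise ℓ¹ norm of a matrix: `‖M‖₁ = Σ_{i,j} |M_{ij}|`. -/
def l1Norm {n : ℕ} (M : Matrix (Fin n) (Fin n) ℝ) : ℝ := ∑ i, ∑ j, |M i j|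

/-- The trace inner product of two matrices: `⟨A, B⟩ = trace(Aᵀ B)`. -/
def mInner {n : ℕ} (A B : Matrix (Fin n) (Fin n) ℝ) : ℝ := Matrix.trace (Aᵀ * B)

/-- A matrix `X ∈ ℝ^{n×n}` is SDP-1-feasible if it is symmetric positive semidefinite,
entrywise nonnegative, has all row sums equal to `n/r`, and has unit diagonal. -/
def SDPFeasible (n r : ℕ) (X : Matrix (Fin n) (Fin n) ℝ) : Prop :=
  X.PosSemidef ∧ (∀ i j, 0 ≤ X i j) ∧ (∀ i, ∑ j, X i j = (n : ℝ) / r) ∧ (∀ i, X i i = 1)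

/-- The population kernel matrix: `K̃_{ij} = f(d_{kℓ}² + σ_k² + σ_ℓ²)` for `i ∈ C̃_k`,
`j ∈ C̃_ℓ`, `i ≠ j`, and `K̃_{ii} = f(0)`, where `d_{kℓ}² = ‖μ_k − μ_ℓ‖²`. -/
noncomputable def popKernel (n r p : ℕ) (z : Fin n → Fin r) (f : ℝ → ℝ)
    (μ : Fin r → Fin p → ℝ) (σ : Fin r → ℝ) : Matrix (Fin n) (Fin n) ℝ :=
  Matrix.of fun i j => if i = j then f 0 else
    f ((∑ t, (μ (z i) t - μ (z j) t) ^ 2) + (σ (z i)) ^ 2 + (σ (z j)) ^ 2)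

/-- `γ_min = min_{k ≠ ℓ} [f(2σ_k²) − f(d_{kℓ}² + σ_k² + σ_ℓ²)]`. -/
noncomputable def gammaMin (r p : ℕ) (f : ℝ → ℝ) (μ : Fin r → Fin p → ℝ)
    (σ : Fin r → ℝ) : ℝ :=
  ⨅ q : {q : Fin r × Fin r // q.1 ≠ q.2},
    (f (2 * (σ q.1.1) ^ 2) -
      f ((∑ t, (μ q.1.1 t - μ q.1.2 t) ^ 2) + (σ q.1.1) ^ 2 + (σ q.1.2) ^ 2))

lemma mInner_eq {m : ℕ} (A B : Matrix (Fin m) (Fin m) ℝ) :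
    mInner A B = ∑ i, ∑ j, A i j * B i j := by
  simp only [mInner, Matrix.trace, Matrix.diag, Matrix.mul_apply, Matrix.transpose_apply]
  exact Finset.sum_comm

lemma psd_pair {m : ℕ} {M : Matrix (Fin m) (Fin m) ℝ} (hM : M.PosSemidef) (i j : Fin m) :
    M i j + M j i ≤ M i i + M j j := by
  have h := hM.dotProduct_mulVec_nonneg (Pi.single i 1 - Pi.single j 1)
  simp only [star_trivial, dotProduct, Matrix.mulVec, Pi.sub_apply, Pi.single_apply,
    sub_mul, mul_sub, mul_ite, mul_one, mul_zero, ite_mul, one_mul, zero_mul,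
    Finset.sum_sub_distrib, Finset.sum_ite_eq', Finset.mem_univ, if_true] at h
  linarith

/-- for any symmetric `K`, if `γ_min > 0` and `X̂` is SDP-1-feasible with
`⟨K, X̂⟩ ≥ ⟨K, X₀⟩`, then `‖X₀ − X̂‖₁ ≤ 2·⟨K − K̃, X̂ − X₀⟩ / γ_min`. -/
theorem stmt_4 (n r p : ℕ) (hr : 2 ≤ r) (hdvd : r ∣ n)
    (z : Fin n → Fin r)
    (hsize : ∀ k : Fin r, (Finset.univ.filter fun i => z i = k).card = n / r)
    (Z : Matrix (Fin n) (Fin r) ℝ)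
    (hZ : Z = Matrix.of (fun i k => if z i = k then (1 : ℝ) else 0))
    (X₀ : Matrix (Fin n) (Fin n) ℝ) (hX₀ : X₀ = Z * Zᵀ)
    (f : ℝ → ℝ) (μ : Fin r → Fin p → ℝ) (σ : Fin r → ℝ)
    (K : Matrix (Fin n) (Fin n) ℝ) (hK : K.IsSymm)
    (hγ : 0 < gammaMin r p f μ σ)
    (Xh : Matrix (Fin n) (Fin n) ℝ) (hfeas : SDPFeasible n r Xh)
    (hopt : mInner K X₀ ≤ mInner K Xh) :
    l1Norm (X₀ - Xh) ≤
      2 * mInner (K - popKernel n r p z f μ σ) (Xh - X₀) / gammaMin r p f μ σ := by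
  classical
  obtain ⟨hpsd, hnn, hrowXh, hdiag⟩ := hfeas
  set γ := gammaMin r p f μ σ with hγdef
  set Kt := popKernel n r p z f μ σ with hKtdef
  -- entries of X₀
  have hX0e : ∀ i j, X₀ i j = if z i = z j then 1 else 0 := by
    intro i j
    subst hX₀ hZ
    simp only [Matrix.mul_apply, Matrix.transpose_apply, Matrix.of_apply]
    rcases eq_or_ne (z i) (z j) with h | h
    · simp [ite_mul, zero_mul, one_mul, Finset.sum_ite_eq, h]
    · simp [ite_mul, zero_mul, one_mul, Finset.sum_ite_eq, h, Ne.symm h]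
  have hrpos : (0:ℝ) < r := by
    have : (0:ℕ) < r := by omega
    exact_mod_cast this
  have hcast : ((n / r : ℕ) : ℝ) = (n:ℝ) / r := Nat.cast_div hdvd (ne_of_gt hrpos)
  have hX0row : ∀ i, ∑ j, X₀ i j = (n:ℝ)/r := by
    intro i
    have e : ∀ j, X₀ i j = if z j = z i then (1:ℝ) else 0 := by
      intro j
      rcases eq_or_ne (z i) (z j) with h | h
      · simp [hX0e, h]
      · simp [hX0e, h, Ne.symm h]
    calc ∑ j, X₀ i j = ∑ j, if z j = z i then (1:ℝ) else 0 :=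
          Finset.sum_congr rfl fun j _ => e j
      _ = ((Finset.univ.filter fun j => z j = z i).card : ℝ) := by rw [Finset.sum_boole]
      _ = ((n/r : ℕ) : ℝ) := by rw [hsize (z i)]
      _ = (n:ℝ)/r := hcast
  have hDrow : ∀ i, ∑ j, (X₀ i j - Xh i j) = 0 := by
    intro i
    rw [Finset.sum_sub_distrib, hX0row, hrowXh]
    ring
  -- Xh entries are at most 1
  have hsym : ∀ i j, Xh j i = Xh i j := by
    intro i j
    have := congrFun (congrFun hpsd.1 i) j
    simpa [Matrix.conjTranspose_apply] using this
  have hub : ∀ i j, Xh i j ≤ 1 := by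
    intro i j
    have h := psd_pair hpsd i j
    rw [hsym i j, hdiag, hdiag] at h
    linarith
  -- gammaMin lower bound
  have hγle : ∀ i j, z i ≠ z j →
      γ ≤ f (2 * (σ (z i))^2) -
        f ((∑ t, (μ (z i) t - μ (z j) t) ^ 2) + (σ (z i)) ^ 2 + (σ (z j)) ^ 2) := by
    intro i j h
    have hbdd : BddBelow (Set.range fun q : {q : Fin r × Fin r // q.1 ≠ q.2} =>
        (f (2 * (σ q.1.1) ^ 2) -
          f ((∑ t, (μ q.1.1 t - μ q.1.2 t) ^ 2) + (σ q.1.1) ^ 2 + (σ q.1.2) ^ 2))) :=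
      Set.Finite.bddBelow (Set.finite_range _)
    exact ciInf_le hbdd ⟨(z i, z j), h⟩
  -- per-row key inequality
  have key : ∀ i, γ * (∑ j, |X₀ i j - Xh i j|) ≤ 2 * ∑ j, Kt i j * (X₀ i j - Xh i j) := by
    intro i
    have hsplit : ∀ g : Fin n → ℝ, ∑ j, g j =
        ∑ j ∈ Finset.univ.filter (fun j => z j = z i), g j +
        ∑ j ∈ Finset.univ.filter (fun j => ¬ z j = z i), g j :=
      fun g => (Finset.sum_filter_add_sum_filter_not _ _ _).symm
    have hX0z : ∀ j ∈ Finset.univ.filter (fun j => ¬ z j = z i), X₀ i j = 0 := by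
      intro j hj
      rw [hX0e, if_neg (fun hc => (Finset.mem_filter.mp hj).2 hc.symm)]
    have hS0 : ∑ j ∈ Finset.univ.filter (fun j => z j = z i), (X₀ i j - Xh i j) =
        ∑ j ∈ Finset.univ.filter (fun j => ¬ z j = z i), Xh i j := by
      have h1 := hDrow i
      rw [hsplit (fun j => X₀ i j - Xh i j)] at h1
      have h2 : ∑ j ∈ Finset.univ.filter (fun j => ¬ z j = z i), (X₀ i j - Xh i j) =
          - ∑ j ∈ Finset.univ.filter (fun j => ¬ z j = z i), Xh i j := by
        rw [Finset.sum_sub_distrib, Finset.sum_eq_zero hX0z]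
        ring
      linarith
    have hSnn : 0 ≤ ∑ j ∈ Finset.univ.filter (fun j => ¬ z j = z i), Xh i j :=
      Finset.sum_nonneg fun j _ => hnn i j
    have habs : ∑ j, |X₀ i j - Xh i j| =
        2 * ∑ j ∈ Finset.univ.filter (fun j => ¬ z j = z i), Xh i j := by
      rw [hsplit (fun j => |X₀ i j - Xh i j|)]
      have e1 : ∑ j ∈ Finset.univ.filter (fun j => z j = z i), |X₀ i j - Xh i j| =
          ∑ j ∈ Finset.univ.filter (fun j => z j = z i), (X₀ i j - Xh i j) := by
        refine Finset.sum_congr rfl fun j hj => abs_of_nonneg ?_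
        have hz := (Finset.mem_filter.mp hj).2
        rw [hX0e, if_pos hz.symm]
        have := hub i j
        linarith
      have e2 : ∑ j ∈ Finset.univ.filter (fun j => ¬ z j = z i), |X₀ i j - Xh i j| =
          ∑ j ∈ Finset.univ.filter (fun j => ¬ z j = z i), Xh i j := by
        refine Finset.sum_congr rfl fun j hj => ?_
        rw [hX0z j hj, zero_sub, abs_neg, abs_of_nonneg (hnn i j)]
      rw [e1, e2, hS0]
      ring
    have hker : γ * ∑ j ∈ Finset.univ.filter (fun j => ¬ z j = z i), Xh i j ≤
        ∑ j, Kt i j * (X₀ i j - Xh i j) := by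
      rw [hsplit (fun j => Kt i j * (X₀ i j - Xh i j))]
      have e1 : ∑ j ∈ Finset.univ.filter (fun j => z j = z i), Kt i j * (X₀ i j - Xh i j) =
          f (2 * (σ (z i))^2) *
            ∑ j ∈ Finset.univ.filter (fun j => ¬ z j = z i), Xh i j := by
        rw [← hS0, Finset.mul_sum]
        refine Finset.sum_congr rfl fun j hj => ?_
        have hz := (Finset.mem_filter.mp hj).2
        by_cases hij : i = j
        · subst hij
          rw [hX0e, if_pos rfl, hdiag]
          ring
        · have hKv : Kt i j = f (2 * (σ (z i))^2) := by
            rw [hKtdef]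
            simp only [popKernel, Matrix.of_apply, if_neg hij]
            congr 1
            rw [hz]
            simp
            ring
          rw [hKv]
      have e2 : f (2 * (σ (z i))^2) *
            (∑ j ∈ Finset.univ.filter (fun j => ¬ z j = z i), Xh i j) +
          ∑ j ∈ Finset.univ.filter (fun j => ¬ z j = z i), Kt i j * (X₀ i j - Xh i j) =
          ∑ j ∈ Finset.univ.filter (fun j => ¬ z j = z i),
            (f (2 * (σ (z i))^2) - Kt i j) * Xh i j := by
        rw [Finset.mul_sum, ← Finset.sum_add_distrib]
        refine Finset.sum_congr rfl fun j hj => ?_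
        rw [hX0z j hj]
        ring
      rw [e1, e2, Finset.mul_sum]
      refine Finset.sum_le_sum fun j hj => ?_
      have hz := (Finset.mem_filter.mp hj).2
      have hij : i ≠ j := fun hc => hz (by rw [hc])
      have hKv : Kt i j =
          f ((∑ t, (μ (z i) t - μ (z j) t) ^ 2) + (σ (z i)) ^ 2 + (σ (z j)) ^ 2) := by
        rw [hKtdef]
        simp only [popKernel, Matrix.of_apply, if_neg hij]
      have h1 := hγle i j (fun hc => hz hc.symm)
      refine mul_le_mul_of_nonneg_right ?_ (hnn i j)
      rw [hKv]
      exact h1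
    rw [habs]
    linarith
  -- sum over rows
  have main : γ * l1Norm (X₀ - Xh) ≤ 2 * mInner Kt (X₀ - Xh) := by
    have h1 : l1Norm (X₀ - Xh) = ∑ i, ∑ j, |X₀ i j - Xh i j| := by
      simp [l1Norm, Matrix.sub_apply]
    have h2 : mInner Kt (X₀ - Xh) = ∑ i, ∑ j, Kt i j * (X₀ i j - Xh i j) := by
      rw [mInner_eq]
      simp [Matrix.sub_apply]
    rw [h1, h2, Finset.mul_sum, Finset.mul_sum]
    exact Finset.sum_le_sum fun i _ => key i
  -- relate Kt inner product to K
  have hsubl : ∀ A B C : Matrix (Fin n) (Fin n) ℝ,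
      mInner (A - B) C = mInner A C - mInner B C := by
    intro A B C
    simp [mInner_eq, Matrix.sub_apply, sub_mul, Finset.sum_sub_distrib]
  have hsubr : ∀ A B C : Matrix (Fin n) (Fin n) ℝ,
      mInner A (B - C) = mInner A B - mInner A C := by
    intro A B C
    simp [mInner_eq, Matrix.sub_apply, mul_sub, Finset.sum_sub_distrib]
  have h3 : mInner Kt (X₀ - Xh) ≤ mInner (K - Kt) (Xh - X₀) := by
    rw [hsubl, hsubr, hsubr, hsubr]
    linarith
  rw [le_div_iff₀ hγ]
  calc l1Norm (X₀ - Xh) * γ = γ * l1Norm (X₀ - Xh) := mul_comm _ _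
    _ ≤ 2 * mInner Kt (X₀ - Xh) := main
    _ ≤ 2 * mInner (K - Kt) (Xh - X₀) := by linarith
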